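/- Let f = a_0(Z) + a_1(Z)T ∈ k[Z,T] with a_0, a_1 ∈ k[Z], f irreducible in k[Z,T], and suppose the unit group of k[Z,T]/(f) equals k^*. Then f is a coordinate of k[Z,T], i.e. k[Z,T] = k[f]^[1]. In particular, if k[Z,T]/(f) ≅ k^[1], then k[Z,T] = k[f]^[1]. -/

import Mathlib

noncomputable section
open MvPolynomial

namespace Stmt11Aux

variable (k : Type) [Field k]

/-- The inclusion `k[Z] → k[Z,T]`, `Z ↦ X 0`. -/
def ψ : Polynomial k →ₐ[k] MvPolynomial (Fin 2) k := Polynomial.aeval (X 0)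

/-- The map `k[Z,T] → k[Z][T]`, `X 0 ↦ C X`, `X 1 ↦ X`. -/
def Φ : MvPolynomial (Fin 2) k →ₐ[k] Polynomial (Polynomial k) :=
  aeval ![Polynomial.C Polynomial.X, Polynomial.X]

/-- The evaluation `k[Z,T] → k[Z]`, `X 0 ↦ X`, `X 1 ↦ 0`. -/
def ev : MvPolynomial (Fin 2) k →ₐ[k] Polynomial k :=
  aeval ![Polynomial.X, 0]

variable {k}

lemma Φ_X0 : Φ k (X 0) = Polynomial.C Polynomial.X := by simp [Φ]

lemma Φ_X1 : Φ k (X 1) = Polynomial.X := by simp [Φ]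

lemma Φ_psi (p : Polynomial k) : Φ k (ψ k p) = Polynomial.C p := by
  rw [ψ, ← Polynomial.aeval_algHom_apply, Φ_X0]
  have := Polynomial.aeval_algHom_apply (Polynomial.CAlgHom (R := k) (A := Polynomial k))
    Polynomial.X p
  rw [Polynomial.aeval_X_left_apply] at this
  simpa [Polynomial.CAlgHom] using this

lemma ev_psi (p : Polynomial k) : ev k (ψ k p) = p := by
  rw [ψ, ← Polynomial.aeval_algHom_apply]
  have h0 : ev k (X 0) = Polynomial.X := by simp [ev]
  rw [h0, Polynomial.aeval_X_left_apply]

lemma isUnit_of_psi {p : Polynomial k} (h : IsUnit (ψ k p)) : IsUnit p := by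
  have := h.map (Φ k)
  rw [Φ_psi] at this
  exact Polynomial.isUnit_C.mp this

lemma psi_C (c : k) : ψ k (Polynomial.C c) = MvPolynomial.C c := by
  simp [ψ, MvPolynomial.algebraMap_eq]

lemma irreducible_of_psi {p : Polynomial k} (h : Irreducible (ψ k p)) : Irreducible p := by
  constructor
  · exact fun hu => h.not_isUnit (hu.map (ψ k))
  · intro a b hab
    rcases h.isUnit_or_isUnit (by rw [hab, map_mul]) with h' | h'
    · exact Or.inl (isUnit_of_psi h')
    · exact Or.inr (isUnit_of_psi h')

/-- The automorphism for the case `f = C b1 * X 0 + C b0`. -/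
lemma equivCase1 (b1 b0 : k) (hb1 : b1 ≠ 0) :
    ∃ e : MvPolynomial (Fin 2) k ≃ₐ[k] MvPolynomial (Fin 2) k,
      e (X 0) = MvPolynomial.C b1 * X 0 + MvPolynomial.C b0 := by
  let F : MvPolynomial (Fin 2) k →ₐ[k] MvPolynomial (Fin 2) k :=
    aeval ![MvPolynomial.C b1 * X 0 + MvPolynomial.C b0, X 1]
  let G : MvPolynomial (Fin 2) k →ₐ[k] MvPolynomial (Fin 2) k :=
    aeval ![MvPolynomial.C b1⁻¹ * (X 0 - MvPolynomial.C b0), X 1]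
  have hb : (MvPolynomial.C b1 : MvPolynomial (Fin 2) k) * MvPolynomial.C b1⁻¹ = 1 := by
    rw [← map_mul, mul_inv_cancel₀ hb1, map_one]
  refine ⟨AlgEquiv.ofAlgHom F G ?_ ?_, ?_⟩
  · apply MvPolynomial.algHom_ext
    intro i
    fin_cases i <;> simp [F, G] <;>
      first
        | linear_combination (X (0 : Fin 2) : MvPolynomial (Fin 2) k) * hb
        | linear_combination (X (0 : Fin 2) : MvPolynomial (Fin 2) k) * hb
            - (MvPolynomial.C b0 : MvPolynomial (Fin 2) k) * hb
        | linear_combination (X (0 : Fin 2) : MvPolynomial (Fin 2) k) * hb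
            + (MvPolynomial.C b0 : MvPolynomial (Fin 2) k) * hb
        | linear_combination (MvPolynomial.C b0 : MvPolynomial (Fin 2) k) * hb
        | linear_combination -(MvPolynomial.C b0 : MvPolynomial (Fin 2) k) * hb
        | linear_combination hb
  · apply MvPolynomial.algHom_ext
    intro i
    fin_cases i <;> simp [F, G] <;>
      first
        | linear_combination (X (0 : Fin 2) : MvPolynomial (Fin 2) k) * hb
        | linear_combination (X (0 : Fin 2) : MvPolynomial (Fin 2) k) * hb
            - (MvPolynomial.C b0 : MvPolynomial (Fin 2) k) * hb
        | linear_combination (X (0 : Fin 2) : MvPolynomial (Fin 2) k) * hb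
            + (MvPolynomial.C b0 : MvPolynomial (Fin 2) k) * hb
        | linear_combination (MvPolynomial.C b0 : MvPolynomial (Fin 2) k) * hb
        | linear_combination -(MvPolynomial.C b0 : MvPolynomial (Fin 2) k) * hb
        | linear_combination hb
  · simp [F]

/-- The automorphism for the case `f = a0(X 0) + C c * X 1`, `c ≠ 0`. -/
lemma equivCase2 (c : k) (hc : c ≠ 0) (a0 : Polynomial k) :
    ∃ e : MvPolynomial (Fin 2) k ≃ₐ[k] MvPolynomial (Fin 2) k,
      e (X 0) = ψ k a0 + MvPolynomial.C c * X 1 := by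
  set f : MvPolynomial (Fin 2) k := ψ k a0 + MvPolynomial.C c * X 1 with hf
  let F : MvPolynomial (Fin 2) k →ₐ[k] MvPolynomial (Fin 2) k := aeval ![f, X 0]
  let G : MvPolynomial (Fin 2) k →ₐ[k] MvPolynomial (Fin 2) k :=
    aeval ![X 1, MvPolynomial.C c⁻¹ * (X 0 - Polynomial.aeval (X 1) a0)]
  have hb : (MvPolynomial.C c : MvPolynomial (Fin 2) k) * MvPolynomial.C c⁻¹ = 1 := by
    rw [← map_mul, mul_inv_cancel₀ hc, map_one]
  have hF0 : F (X 0) = f := by simp [F]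
  have hF1 : F (X 1) = X 0 := by simp [F]
  have hG0 : G (X 0) = X 1 := by simp [G]
  have hG1 : G (X 1) = MvPolynomial.C c⁻¹ * (X 0 - Polynomial.aeval (X 1) a0) := by simp [G]
  have hFa : F (Polynomial.aeval (X 1) a0) = Polynomial.aeval (X 0 : MvPolynomial (Fin 2) k) a0 := by
    rw [← Polynomial.aeval_algHom_apply, hF1]
  have hGa : G (ψ k a0) = Polynomial.aeval (X 1 : MvPolynomial (Fin 2) k) a0 := by
    rw [ψ, ← Polynomial.aeval_algHom_apply, hG0]
  refine ⟨AlgEquiv.ofAlgHom F G ?_ ?_, ?_⟩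
  · apply MvPolynomial.algHom_ext
    intro i
    fin_cases i
    · simpa [hG0] using hF1
    · rw [AlgHom.comp_apply, AlgHom.id_apply]
      show F (G (X 1)) = X 1
      rw [hG1, map_mul, map_sub, hF0, hFa, MvPolynomial.aeval_C]
      rw [MvPolynomial.algebraMap_eq, hf, ψ]
      linear_combination (X (1 : Fin 2) : MvPolynomial (Fin 2) k) * hb
  · apply MvPolynomial.algHom_ext
    intro i
    fin_cases i
    · rw [AlgHom.comp_apply, AlgHom.id_apply]
      show G (F (X 0)) = X 0
      rw [hF0, hf, map_add, map_mul, hGa, hG1, MvPolynomial.aeval_C, MvPolynomial.algebraMap_eq]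
      linear_combination ((X (0 : Fin 2) : MvPolynomial (Fin 2) k)
        - Polynomial.aeval (X 1 : MvPolynomial (Fin 2) k) a0) * hb
    · simpa [hF1] using hG0
  · simpa using hF0

/-- There is no `k`-algebra isomorphism `k[Z,T] ≃ k[X]`. -/
lemma no_equiv (h : Nonempty (MvPolynomial (Fin 2) k ≃ₐ[k] Polynomial k)) : False := by
  obtain ⟨θ⟩ := h
  classical
  let P1 : Ideal (MvPolynomial (Fin 2) k) :=
    RingHom.ker (aeval (R := k) ![(0 : Polynomial k), Polynomial.X])
  let P2 : Ideal (MvPolynomial (Fin 2) k) :=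
    RingHom.ker (aeval (R := k) ![(0 : k), (0 : k)])
  haveI hP1 : P1.IsPrime := RingHom.ker_isPrime _
  haveI hP2 : P2.IsPrime := RingHom.ker_isPrime _
  have hle : P1 ≤ P2 := by
    intro x hx
    have hx' : aeval (R := k) ![(0 : Polynomial k), Polynomial.X] x = 0 := hx
    have hcomp : (Polynomial.aeval (0 : k)).comp (aeval (R := k) ![(0 : Polynomial k), Polynomial.X])
        = aeval (R := k) ![(0 : k), (0 : k)] := by
      rw [MvPolynomial.comp_aeval]
      congr 1
      funext i
      fin_cases i <;> simp
    show aeval (R := k) ![(0 : k), (0 : k)] x = 0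
    rw [← hcomp]
    simp [hx']
  have hX0P1 : (X 0 : MvPolynomial (Fin 2) k) ∈ P1 := by
    show aeval _ (X 0) = 0; simp
  have hX1P2 : (X 1 : MvPolynomial (Fin 2) k) ∈ P2 := by
    show aeval _ (X 1) = 0; simp
  have hX1P1 : (X 1 : MvPolynomial (Fin 2) k) ∉ P1 := by
    show ¬ aeval _ (X 1) = 0
    simpa using Polynomial.X_ne_zero
  -- transport along θ
  let ρ : MvPolynomial (Fin 2) k ≃+* Polynomial k := θ.toRingEquiv
  let Q1 := P1.map (ρ : MvPolynomial (Fin 2) k ≃+* Polynomial k)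
  let Q2 := P2.map (ρ : MvPolynomial (Fin 2) k ≃+* Polynomial k)
  haveI hQ1 : Q1.IsPrime := Ideal.map_isPrime_of_equiv ρ
  haveI hQ2 : Q2.IsPrime := Ideal.map_isPrime_of_equiv ρ
  have hQle : Q1 ≤ Q2 := Ideal.map_mono hle
  have hQ1ne : Q1 ≠ ⊥ := by
    intro hbot
    have : ρ (X 0) ∈ Q1 := Ideal.mem_map_of_mem _ hX0P1
    rw [hbot, Ideal.mem_bot] at this
    exact MvPolynomial.X_ne_zero 0 (ρ.injective (by simpa using this))
  haveI hQ1max : Q1.IsMaximal := IsPrime.to_maximal_ideal hQ1ne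
  have hX1Q2 : ρ (X 1) ∈ Q2 := Ideal.mem_map_of_mem _ hX1P2
  have hX1Q1 : ρ (X 1) ∉ Q1 := by
    intro hmem
    rw [Ideal.mem_map_of_equiv] at hmem
    obtain ⟨y, hy, hy2⟩ := hmem
    exact hX1P1 (by rwa [ρ.injective hy2] at hy)
  have := hQ1max.eq_of_le hQ2.ne_top hQle
  rw [← this] at hX1Q2
  exact hX1Q1 hX1Q2

lemma no_equiv' (h : Nonempty ((MvPolynomial (Fin 2) k ⧸
    Ideal.span {(0 : MvPolynomial (Fin 2) k)}) ≃ₐ[k] Polynomial k)) : False := by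
  obtain ⟨θ⟩ := h
  have hinj : Function.Injective
      (Ideal.Quotient.mkₐ k (Ideal.span {(0 : MvPolynomial (Fin 2) k)})) := by
    intro a b hab
    have hab' : Ideal.Quotient.mk (Ideal.span {(0 : MvPolynomial (Fin 2) k)}) a
        = Ideal.Quotient.mk (Ideal.span {(0 : MvPolynomial (Fin 2) k)}) b := hab
    rw [Ideal.Quotient.eq, Ideal.span_singleton_eq_bot.mpr rfl, Ideal.mem_bot,
      sub_eq_zero] at hab'
    exact hab'
  have e0 : MvPolynomial (Fin 2) k ≃ₐ[k]
      (MvPolynomial (Fin 2) k ⧸ Ideal.span {(0 : MvPolynomial (Fin 2) k)}) :=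
    AlgEquiv.ofBijective (Ideal.Quotient.mkₐ k _) ⟨hinj, Ideal.Quotient.mk_surjective⟩
  exact no_equiv ⟨e0.trans θ⟩

end Stmt11Aux

open Stmt11Aux

set_option maxHeartbeats 1000000 in
set_option synthInstance.maxHeartbeats 200000 in
/-- Lemma 5.21. Let `f = a₀(Z) + a₁(Z)·T ∈ k[Z,T]` (with `Z = X 0`,
`T = X 1`). If `f` is irreducible and the unit group of `k[Z,T]/(f)` equals `k^*`, then
`f` is a coordinate of `k[Z,T]`. In particular, if `k[Z,T]/(f) ≅ k^[1]`, then `f` is a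
coordinate of `k[Z,T]`. -/
theorem stmt11 (k : Type) [Field k] (a0 a1 : Polynomial k)
    (f : MvPolynomial (Fin 2) k)
    (hf : f = Polynomial.aeval (MvPolynomial.X 0) a0
        + Polynomial.aeval (MvPolynomial.X 0) a1 * MvPolynomial.X 1) :
    ((Irreducible f →
        (∀ u : MvPolynomial (Fin 2) k ⧸ Ideal.span {f},
            IsUnit u → ∃ c : k, u = algebraMap k _ c) →
        ∃ e : MvPolynomial (Fin 2) k ≃ₐ[k] MvPolynomial (Fin 2) k,
          e (MvPolynomial.X 0) = f)) ∧
    (Nonempty ((MvPolynomial (Fin 2) k ⧸ Ideal.span {f}) ≃ₐ[k] Polynomial k) →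
      ∃ e : MvPolynomial (Fin 2) k ≃ₐ[k] MvPolynomial (Fin 2) k,
        e (MvPolynomial.X 0) = f) := by
  classical
  have hfψ : f = ψ k a0 + ψ k a1 * MvPolynomial.X 1 := hf
  set π := Ideal.Quotient.mk (Ideal.span {f}) with hπ
  have hπf : π f = 0 := Ideal.Quotient.eq_zero_iff_mem.mpr (Ideal.mem_span_singleton_self f)
  have halg : ∀ c : k, algebraMap k (MvPolynomial (Fin 2) k ⧸ Ideal.span {f}) c
      = π (MvPolynomial.C c) := by
    intro c
    rw [IsScalarTower.algebraMap_apply k (MvPolynomial (Fin 2) k), MvPolynomial.algebraMap_eq]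
    rfl
  have main : Irreducible f →
      (∀ u : MvPolynomial (Fin 2) k ⧸ Ideal.span {f},
          IsUnit u → ∃ c : k, u = algebraMap k _ c) →
      ∃ e : MvPolynomial (Fin 2) k ≃ₐ[k] MvPolynomial (Fin 2) k,
        e (MvPolynomial.X 0) = f := by
    intro h1 h2
    by_cases ha1 : a1 = 0
    · -- case a1 = 0 : f = ψ a0, a0 linear
      have hfa : f = ψ k a0 := by rw [hfψ, ha1]; simp
      have hirr0 : Irreducible a0 := irreducible_of_psi (by rwa [hfa] at h1)
      have ha0ne : a0 ≠ 0 := hirr0.ne_zero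
      have hge : 1 ≤ a0.natDegree := by
        rcases Nat.eq_zero_or_pos a0.natDegree with h | h
        · obtain ⟨b, hb⟩ := Polynomial.natDegree_eq_zero.mp h
          exfalso
          apply hirr0.not_isUnit
          rw [← hb]
          exact Polynomial.isUnit_C.mpr (isUnit_iff_ne_zero.mpr (by rintro rfl; simp [← hb] at ha0ne))
        · exact h
      have hdeg : a0.natDegree = 1 := by
        by_cases hXd : a0 ∣ Polynomial.X
        · exact le_antisymm (by simpa using Polynomial.natDegree_le_of_dvd hXd Polynomial.X_ne_zero) hge
        · have hco : IsCoprime a0 Polynomial.X := hirr0.coprime_iff_not_dvd.mpr hXd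
          obtain ⟨u, v, huv⟩ := hco
          have key : ψ k u * f + ψ k v * MvPolynomial.X 0 = 1 := by
            have h3 := congrArg (ψ k) huv
            simp only [map_add, map_mul, map_one] at h3
            rw [hfa]
            have hx : ψ k Polynomial.X = MvPolynomial.X 0 := by simp [ψ]
            rw [← hx]
            linear_combination h3
          have hunit : IsUnit (π (MvPolynomial.X 0)) := by
            refine IsUnit.of_mul_eq_one (π (ψ k v)) ?_
            rw [← map_mul]
            have : MvPolynomial.X 0 * ψ k v = 1 - ψ k u * f := by linear_combination key
            rw [this, map_sub, map_one, map_mul, hπf, mul_zero, sub_zero]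
          obtain ⟨c', hc'⟩ := h2 _ hunit
          have hmem : MvPolynomial.X 0 - MvPolynomial.C c' ∈ Ideal.span {f} := by
            rw [← Ideal.Quotient.eq_zero_iff_mem]
            show π _ = 0
            rw [map_sub, hc', halg, sub_self]
          have hdvd : f ∣ MvPolynomial.X 0 - MvPolynomial.C c' :=
            Ideal.mem_span_singleton.mp hmem
          have hdvd2 : a0 ∣ Polynomial.X - Polynomial.C c' := by
            have := map_dvd (ev k) hdvd
            rw [hfa, ev_psi] at this
            have hev : ev k (MvPolynomial.X 0 - MvPolynomial.C c')
                = Polynomial.X - Polynomial.C c' := by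
              simp [ev, MvPolynomial.algebraMap_eq, Polynomial.algebraMap_eq]
            rwa [hev] at this
          have hne : Polynomial.X - Polynomial.C c' ≠ (0 : Polynomial k) :=
            Polynomial.X_sub_C_ne_zero c'
          have := Polynomial.natDegree_le_of_dvd hdvd2 hne
          rw [Polynomial.natDegree_X_sub_C] at this
          exact le_antisymm this hge
      -- a0 = C b1 * X + C b0
      have hform := Polynomial.eq_X_add_C_of_natDegree_le_one (p := a0) (by rw [hdeg])
      have hb1 : a0.coeff 1 ≠ 0 := by
        have hlc : a0.coeff 1 = a0.leadingCoeff := by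
          rw [Polynomial.leadingCoeff, hdeg]
        rw [hlc]
        exact Polynomial.leadingCoeff_ne_zero.mpr ha0ne
      obtain ⟨e, he⟩ := equivCase1 (k := k) (a0.coeff 1) (a0.coeff 0) hb1
      refine ⟨e, ?_⟩
      rw [he, hfa]
      conv_rhs => rw [hform]
      simp [ψ, MvPolynomial.algebraMap_eq]
    · -- case a1 ≠ 0
      have hΦf : Φ k f = Polynomial.C a1 * Polynomial.X + Polynomial.C a0 := by
        rw [hfψ, map_add, map_mul, Φ_psi, Φ_psi, Φ_X1]
        ring
      have hdegf : (Φ k f).natDegree = 1 := by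
        rw [hΦf]
        exact Polynomial.natDegree_linear ha1
      -- coprimality
      set d := EuclideanDomain.gcd a0 a1 with hd
      have hd0 : d ≠ 0 := by
        intro h
        exact ha1 (EuclideanDomain.gcd_eq_zero_iff.mp h).2
      obtain ⟨A0, hA0⟩ : d ∣ a0 := EuclideanDomain.gcd_dvd_left a0 a1
      obtain ⟨A1, hA1⟩ : d ∣ a1 := EuclideanDomain.gcd_dvd_right a0 a1
      have hffac : f = ψ k d * (ψ k A0 + ψ k A1 * MvPolynomial.X 1) := by
        rw [hfψ, hA0, hA1, map_mul, map_mul]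
        ring
      have hco : IsCoprime a0 a1 := by
        rcases h1.isUnit_or_isUnit hffac with h | h
        · exact EuclideanDomain.gcd_isUnit_iff.mp (isUnit_of_psi h)
        · exfalso
          have hΦg := h.map (Φ k)
          have hgne : Φ k (ψ k A0 + ψ k A1 * MvPolynomial.X 1) ≠ 0 := hΦg.ne_zero
          have : (Φ k f).natDegree = 0 := by
            rw [hffac, map_mul, Polynomial.natDegree_mul (by rw [Φ_psi]; exact Polynomial.C_ne_zero.mpr hd0) hgne,
              Φ_psi, Polynomial.natDegree_C, Polynomial.natDegree_eq_zero_of_isUnit hΦg]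
          rw [hdegf] at this
          exact one_ne_zero this
      obtain ⟨u, v, huv⟩ := hco
      have key : ψ k a1 * (ψ k v - ψ k u * MvPolynomial.X 1) = 1 - ψ k u * f := by
        have h3 := congrArg (ψ k) huv
        simp only [map_add, map_mul, map_one] at h3
        rw [hfψ]
        linear_combination h3
      have hunit : IsUnit (π (ψ k a1)) := by
        refine IsUnit.of_mul_eq_one (π (ψ k v - ψ k u * MvPolynomial.X 1)) ?_
        rw [← map_mul, key, map_sub, map_one, map_mul, hπf, mul_zero, sub_zero]
      obtain ⟨c, hc⟩ := h2 _ hunit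
      have hmem : ψ k a1 - MvPolynomial.C c ∈ Ideal.span {f} := by
        rw [← Ideal.Quotient.eq_zero_iff_mem]
        show π _ = 0
        rw [map_sub, hc, halg, sub_self]
      have hdvd : f ∣ ψ k a1 - MvPolynomial.C c := Ideal.mem_span_singleton.mp hmem
      have ha1c : a1 = Polynomial.C c := by
        by_contra hne
        have hΦdvd := map_dvd (Φ k) hdvd
        rw [map_sub, Φ_psi, ← psi_C, Φ_psi, ← Polynomial.C_sub] at hΦdvd
        have hne0 : Polynomial.C (a1 - Polynomial.C c) ≠ (0 : Polynomial (Polynomial k)) :=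
          Polynomial.C_ne_zero.mpr (sub_ne_zero.mpr hne)
        have := Polynomial.natDegree_le_of_dvd hΦdvd hne0
        rw [hdegf, Polynomial.natDegree_C] at this
        exact Nat.not_succ_le_zero 0 this
      have hcne : c ≠ 0 := by
        rintro rfl
        exact ha1 (by rw [ha1c, map_zero])
      obtain ⟨e, he⟩ := equivCase2 (k := k) c hcne a0
      refine ⟨e, ?_⟩
      rw [he, hfψ, ha1c, psi_C]
  refine ⟨main, ?_⟩
  rintro ⟨θ⟩
  have hf0 : f ≠ 0 := by
    rintro rfl
    exact no_equiv' ⟨θ⟩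
  haveI hdom : IsDomain (MvPolynomial (Fin 2) k ⧸ Ideal.span {f}) :=
    MulEquiv.isDomain (Polynomial k) θ.toRingEquiv.toMulEquiv
  have hprime : (Ideal.span {f}).IsPrime :=
    (Ideal.Quotient.isDomain_iff_prime _).mp hdom
  have hpf : Prime f := (Ideal.span_singleton_prime hf0).mp hprime
  apply main hpf.irreducible
  intro u hu
  have hθu : IsUnit (θ u) := hu.map θ
  rw [Polynomial.isUnit_iff] at hθu
  obtain ⟨c, _, hcu⟩ := hθu
  refine ⟨c, ?_⟩
  have := congrArg θ.symm hcu
  rw [AlgEquiv.symm_apply_apply] at this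
  rw [← this, ← Polynomial.algebraMap_eq, AlgEquiv.commutes]
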